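/- For every real x > 1 and every natural number l, the Legendre polynomial satisfies P_l(x) > (1/3)·(x + (1/2)·√(x²−1))^l. -/
import Mathlib


open MeasureTheory Real

/-- The `l`-th Legendre polynomial via the Laplace integral representation,
valid for `x > 1`. -/
noncomputable def legendreP (l : ℕ) (x : ℝ) : ℝ :=
  (1 / π) * ∫ φ in (0:ℝ)..π, (x + Real.sqrt (x ^ 2 - 1) * Real.cos φ) ^ l

theorem legendre_lower_bound (x : ℝ) (hx : 1 < x) (l : ℕ) :
    (1 / 3) * (x + (1 / 2) * Real.sqrt (x ^ 2 - 1)) ^ l < legendreP l x := by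
  set s := Real.sqrt (x ^ 2 - 1) with hs_def
  have hx0 : 0 < x := lt_trans one_pos hx
  have hs0 : 0 ≤ s := Real.sqrt_nonneg _
  have hsx : s < x := by
    rw [hs_def, show x ^ 2 - 1 = x ^ 2 - 1 from rfl]
    have : x ^ 2 - 1 < x ^ 2 := by linarith
    calc Real.sqrt (x ^ 2 - 1) < Real.sqrt (x ^ 2) :=
          Real.sqrt_lt_sqrt (by nlinarith) this
      _ = x := by rw [Real.sqrt_sq hx0.le]
  set f : ℝ → ℝ := fun φ => (x + s * Real.cos φ) ^ l with hf_def
  have hfc : Continuous f := by fun_prop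
  have hbase : ∀ φ : ℝ, 0 < x + s * Real.cos φ := by
    intro φ
    have h1 : -1 ≤ Real.cos φ := Real.neg_one_le_cos φ
    nlinarith
  set c : ℝ := x + (1 / 2) * s with hc_def
  have hc0 : 0 < c := by positivity
  have hsplit : (∫ φ in (0:ℝ)..π, f φ) =
      (∫ φ in (0:ℝ)..(π/3), f φ) + ∫ φ in (π/3:ℝ)..π, f φ :=
    (intervalIntegral.integral_add_adjacent_intervals
      (hfc.intervalIntegrable _ _) (hfc.intervalIntegrable _ _)).symm
  have hpi : 0 < π := Real.pi_pos
  have h1 : (π/3) * c ^ l ≤ ∫ φ in (0:ℝ)..(π/3), f φ := by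
    have : (∫ φ in (0:ℝ)..(π/3), c ^ l) ≤ ∫ φ in (0:ℝ)..(π/3), f φ := by
      apply intervalIntegral.integral_mono_on (by positivity)
        (intervalIntegrable_const) (hfc.intervalIntegrable _ _)
      intro φ hφ
      have hφ1 : 0 ≤ φ := hφ.1
      have hφ2 : φ ≤ π/3 := hφ.2
      have hcos : (1:ℝ)/2 ≤ Real.cos φ := by
        have := Real.cos_le_cos_of_nonneg_of_le_pi hφ1 (by linarith) hφ2
        rwa [Real.cos_pi_div_three] at this
      have hmul : s * (1/2) ≤ s * Real.cos φ := mul_le_mul_of_nonneg_left hcos hs0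
      have : c ≤ x + s * Real.cos φ := by rw [hc_def]; linarith
      exact pow_le_pow_left₀ hc0.le this l
    simpa using this
  have h2 : 0 < ∫ φ in (π/3:ℝ)..π, f φ := by
    apply intervalIntegral.intervalIntegral_pos_of_pos_on
      (hfc.intervalIntegrable _ _) (fun φ _ => pow_pos (hbase φ) l) (by linarith)
  have hI : π * ((1/3) * c ^ l) < ∫ φ in (0:ℝ)..π, f φ := by
    rw [hsplit]; nlinarith
  rw [legendreP]
  have hmul := mul_lt_mul_of_pos_left hI (by positivity : (0:ℝ) < 1/π)
  calc (1/3) * c ^ l = 1/π * (π * (1/3 * c ^ l)) := by field_simp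
    _ < 1/π * ∫ φ in (0:ℝ)..π, f φ := hmul
    _ = _ := rfl
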